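/- An LFSA S is not ω-strongly detectable if and only if in the self-composition CC(S) there exists a run q0' →s1' q1' →s2' q1' →s3' q2' with q0' initial, ℓ(s2') nonempty, the left and right components of q2' distinct, and additionally in S there exists a transition cycle reachable from the left component of q2'. -/

import Mathlib

/-- A labeled finite-state automaton (LFSA): transition relation `δ`,
initial states `Q0`, labeling `lab` (where `none` stands for ε, i.e. unobservable). -/
structure LFSA (Q : Type*) (E : Type*) (A : Type*) where
  δ : Q → E → Q → Prop
  Q0 : Set Q
  lab : E → Option A

namespace LFSA

variable {Q Q1 Q2 E A : Type*}

/-- A run `q →s q'` over a finite event sequence. -/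
inductive Run (S : LFSA Q E A) : Q → List E → Q → Prop
  | nil (q : Q) : Run S q [] q
  | cons {q q' q'' : Q} {e : E} {s : List E} :
      S.δ q e q' → Run S q' s q'' → Run S q (e :: s) q''

/-- Output (label sequence) of an event sequence. -/
def out (S : LFSA Q E A) (s : List E) : List A := s.filterMap S.lab

/-- Generated finite language. -/
def L (S : LFSA Q E A) : Set (List E) := {s | ∃ q0 ∈ S.Q0, ∃ q, S.Run q0 s q}

/-- Current-state estimate after observing `σ`. -/
def M (S : LFSA Q E A) (σ : List A) : Set Q :=
  {q | ∃ q0 ∈ S.Q0, ∃ s : List E, S.out s = σ ∧ S.Run q0 s q}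

/-- Reachability via a nonempty event sequence. -/
def ReachPlus (S : LFSA Q E A) (q q' : Q) : Prop := ∃ s : List E, s ≠ [] ∧ S.Run q s q'

/-- There is a transition cycle reachable from `q` (a cycle at `q` itself counts). -/
def CycleReachableFrom (S : LFSA Q E A) (q : Q) : Prop :=
  ∃ p : Q, (p = q ∨ S.ReachPlus q p) ∧ ∃ s : List E, s ≠ [] ∧ S.Run p s p

/-- `*`-strong detectability. -/
def StarSD (S : LFSA Q E A) : Prop :=
  ∃ k : ℕ, 0 < k ∧ ∀ s ∈ S.L, ∀ σ : List A, σ <+: S.out s → k < σ.length →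
    ∃ q : Q, S.M σ = {q}

/-- ω-strong detectability. -/
def OmegaSD (S : LFSA Q E A) : Prop :=
  ∃ k : ℕ, 0 < k ∧ ∀ (s : ℕ → E) (ρ : ℕ → Q), ρ 0 ∈ S.Q0 →
    (∀ n : ℕ, S.δ (ρ n) (s n) (ρ (n + 1))) →
    ∀ (n : ℕ) (σ : List A), σ <+: S.out (List.ofFn (fun i : Fin n => s i)) →
      k < σ.length → ∃ q : Q, S.M σ = {q}

/-- Concurrent composition: observable transitions with equal labels synchronize,
unobservable transitions interleave. Events are pairs over `Option E` (`none` = ε). -/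
def CC (S1 : LFSA Q1 E A) (S2 : LFSA Q2 E A) :
    LFSA (Q1 × Q2) (Option E × Option E) A where
  δ p ev p' :=
    match ev with
    | (some e, some e') =>
        (∃ a : A, S1.lab e = some a ∧ S2.lab e' = some a) ∧
          S1.δ p.1 e p'.1 ∧ S2.δ p.2 e' p'.2
    | (some e, none) => S1.lab e = none ∧ S1.δ p.1 e p'.1 ∧ p.2 = p'.2
    | (none, some e') => S2.lab e' = none ∧ p.1 = p'.1 ∧ S2.δ p.2 e' p'.2
    | (none, none) => False
  Q0 := {p | p.1 ∈ S1.Q0 ∧ p.2 ∈ S2.Q0}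
  lab ev := ev.1.bind S1.lab

/-- Left projection of an event sequence of a concurrent composition. -/
def lproj (s : List (Option E × Option E)) : List E := s.filterMap Prod.fst

/-- Right projection of an event sequence of a concurrent composition. -/
def rproj (s : List (Option E × Option E)) : List E := s.filterMap Prod.snd

/-- Unobservable reach of a set of states. -/
def UR (S : LFSA Q E A) (X : Set Q) : Set Q :=
  {q | ∃ q0 ∈ X, ∃ s : List E, S.out s = [] ∧ S.Run q0 s q}

/-- One step of the observer (powerset construction). -/
def obsStep (S : LFSA Q E A) (x : Set Q) (a : A) : Set Q :=
  {q' | ∃ q ∈ x, ∃ (e : E) (p : Q), S.lab e = some a ∧ S.δ q e p ∧ q' ∈ S.UR {p}}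

/-- Observer run (deterministic). -/
def obsRun (S : LFSA Q E A) (x : Set Q) (σ : List A) : Set Q := σ.foldl S.obsStep x

/-- The concurrent composition `CC(S_ε, Obs^ε)` of `S` (with events relabeled by their
labels) and a deterministic observer with step function `ostep` and initial state `x0`:
observable transitions move both components, unobservable ones move only the left one. -/
def CCObs (S : LFSA Q E A) (ostep : Set Q → A → Set Q) (x0 : Set Q) :
    LFSA (Q × Set Q) E A where
  δ p e p' := S.δ p.1 e p'.1 ∧
    (∀ a : A, S.lab e = some a → p'.2 = ostep p.2 a) ∧
    (S.lab e = none → p'.2 = p.2)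
  Q0 := {p | p.1 ∈ S.Q0 ∧ p.2 = x0}
  lab := S.lab

/-- A state is reachable if it is an initial state or reachable from one. -/
def Reachable (S : LFSA Q E A) (q : Q) : Prop := ∃ q0 ∈ S.Q0, ∃ s : List E, S.Run q0 s q

/-- Restriction of an automaton to a set of allowed states. -/
def restrict (S : LFSA Q E A) (P : Set Q) : LFSA Q E A where
  δ q e q' := S.δ q e q' ∧ q ∈ P ∧ q' ∈ P
  Q0 := S.Q0 ∩ P
  lab := S.lab

/-- A run all of whose states (including endpoints) lie in `P`. -/
inductive RunIn (S : LFSA Q E A) (P : Set Q) : Q → List E → Q → Prop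
  | nil (q : Q) : q ∈ P → RunIn S P q [] q
  | cons {q q' q'' : Q} {e : E} {s : List E} :
      q ∈ P → S.δ q e q' → RunIn S P q' s q'' → RunIn S P q (e :: s) q''

/-- Normal subautomaton: all faulty transitions removed. -/
def Sn (S : LFSA Q E A) (Ef : Set E) : LFSA Q E A where
  δ q e q' := S.δ q e q' ∧ e ∉ Ef
  Q0 := S.Q0
  lab := S.lab

/-- Faulty subautomaton: faulty transitions together with all their
predecessor and successor transitions. -/
def Sf (S : LFSA Q E A) (Ef : Set E) : LFSA Q E A where
  δ q e q' := S.δ q e q' ∧ ∃ c f d, f ∈ Ef ∧ S.δ c f d ∧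
      ((q = c ∧ e = f ∧ q' = d) ∨ (c = q' ∨ S.ReachPlus q' c) ∨ (q = d ∨ S.ReachPlus d q))
  Q0 := S.Q0
  lab := S.lab

/-- `s` ends with a faulty event. -/
def EndsFaulty (Ef : Set E) (s : List E) : Prop := ∃ (t : List E) (e : E), e ∈ Ef ∧ s = t ++ [e]

/-- `E_f`-diagnosability. -/
def Diag (S : LFSA Q E A) (Ef : Set E) : Prop :=
  ∃ k : ℕ, ∀ s ∈ S.L, EndsFaulty Ef s → ∀ s' : List E, s ++ s' ∈ S.L → k < s'.length →
    ∀ s'' ∈ S.L, S.out s'' = S.out (s ++ s') → ∃ e ∈ Ef, e ∈ s''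

/-- `E_f`-predictability. -/
def Pred (S : LFSA Q E A) (Ef : Set E) : Prop :=
  ∃ k : ℕ, ∀ s ∈ S.L, EndsFaulty Ef s →
    ∃ s' : List E, s' <+: s ∧ (∀ e ∈ s', e ∉ Ef) ∧
      ∀ u v : List E, u ++ v ∈ S.L → S.out s' = S.out u → (∀ e ∈ u, e ∉ Ef) →
        k < v.length → ∃ e ∈ Ef, e ∈ v

/-- Current-state opacity. -/
def CSO (S : LFSA Q E A) (QS : Set Q) : Prop :=
  ∀ q0 ∈ S.Q0, ∀ (s : List E) (q : Q), S.Run q0 s q → q ∈ QS →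
    ∃ q0' ∈ S.Q0, ∃ (s' : List E) (q' : Q), S.Run q0' s' q' ∧ q' ∉ QS ∧ S.out s = S.out s'

/-- Initial-state opacity. -/
def ISO (S : LFSA Q E A) (QS : Set Q) : Prop :=
  ∀ q0 ∈ S.Q0 ∩ QS, ∀ (s : List E) (q : Q), S.Run q0 s q →
    ∃ q0' ∈ S.Q0 \ QS, ∃ (s' : List E) (q' : Q), S.Run q0' s' q' ∧ S.out s = S.out s'

/-- Infinite-step opacity. -/
def InfSO (S : LFSA Q E A) (QS : Set Q) : Prop :=
  ∀ q0 ∈ S.Q0, ∀ (s1 : List E) (q1 : Q) (s2 : List E) (q2 : Q),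
    S.Run q0 s1 q1 → S.Run q1 s2 q2 → q1 ∈ QS →
    ∃ q0' ∈ S.Q0, ∃ (s1' : List E) (q1' : Q) (s2' : List E) (q2' : Q),
      S.Run q0' s1' q1' ∧ S.Run q1' s2' q2' ∧ q1' ∉ QS ∧
        S.out s1 = S.out s1' ∧ S.out s2 = S.out s2'

/-- `K`-step opacity. -/
def KSO (S : LFSA Q E A) (QS : Set Q) (K : ℕ) : Prop :=
  ∀ q0 ∈ S.Q0, ∀ (s1 : List E) (q1 : Q) (s2 : List E) (q2 : Q),
    S.Run q0 s1 q1 → S.Run q1 s2 q2 → q1 ∈ QS → (S.out s2).length ≤ K →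
    ∃ q0' ∈ S.Q0, ∃ (s1' : List E) (q1' : Q) (s2' : List E) (q2' : Q),
      S.Run q0' s1' q1' ∧ S.Run q1' s2' q2' ∧ q1' ∉ QS ∧
        S.out s1 = S.out s1' ∧ S.out s2 = S.out s2'

/-- Strong current-state opacity: the matching run is entirely non-secret. -/
def SCSO (S : LFSA Q E A) (QS : Set Q) : Prop :=
  ∀ q0 ∈ S.Q0, ∀ (s : List E) (q : Q), S.Run q0 s q → q ∈ QS →
    ∃ q0' ∈ S.Q0, ∃ (s' : List E) (q' : Q), S.RunIn QSᶜ q0' s' q' ∧ S.out s = S.out s'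

/-- Strong initial-state opacity. -/
def SISO (S : LFSA Q E A) (QS : Set Q) : Prop :=
  ∀ q0 ∈ S.Q0 ∩ QS, ∀ (s : List E) (q : Q), S.Run q0 s q →
    ∃ q0' ∈ S.Q0 \ QS, ∃ (s' : List E) (q' : Q), S.RunIn QSᶜ q0' s' q' ∧ S.out s = S.out s'

/-- Strong infinite-step opacity. -/
def SInfSO (S : LFSA Q E A) (QS : Set Q) : Prop :=
  ∀ q0 ∈ S.Q0, ∀ (s1 : List E) (q1 : Q) (s2 : List E) (q2 : Q),
    S.Run q0 s1 q1 → S.Run q1 s2 q2 → q1 ∈ QS →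
    ∃ q0' ∈ S.Q0, ∃ (s1' : List E) (q1' : Q) (s2' : List E) (q2' : Q),
      S.RunIn QSᶜ q0' s1' q1' ∧ S.RunIn QSᶜ q1' s2' q2' ∧
        S.out s1 = S.out s1' ∧ S.out s2 = S.out s2'

/-- Strong `K`-step opacity. -/
def SKSO (S : LFSA Q E A) (QS : Set Q) (K : ℕ) : Prop :=
  ∀ q0 ∈ S.Q0, ∀ (s1 : List E) (q1 : Q) (s2 : List E) (q2 : Q),
    S.Run q0 s1 q1 → S.Run q1 s2 q2 → q1 ∈ QS → (S.out s2).length ≤ K →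
    ∃ q0' ∈ S.Q0, ∃ (s1' : List E) (q1' : Q) (s2' : List E) (q2' : Q),
      S.RunIn QSᶜ q0' s1' q1' ∧ S.RunIn QSᶜ q1' s2' q2' ∧
        S.out s1 = S.out s1' ∧ S.out s2 = S.out s2'

/-- Observer step of the secret-deleted subautomaton `S_dss`. -/
def dssObsStep (S : LFSA Q E A) (QS : Set Q) : Set Q → A → Set Q :=
  (S.restrict QSᶜ).obsStep

/-- Initial observer state of the secret-deleted subautomaton. -/
def dssInit (S : LFSA Q E A) (QS : Set Q) : Set Q :=
  (S.restrict QSᶜ).UR (S.restrict QSᶜ).Q0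

end LFSA


namespace LFSA

variable {Q E A P F : Type*}

theorem Run.append {S : LFSA Q E A} {q q' q'' : Q} {s t : List E}
    (h : S.Run q s q') (h' : S.Run q' t q'') : S.Run q (s ++ t) q'' := by
  induction h with
  | nil => exact h'
  | cons hd _ ih => exact .cons hd (ih h')

theorem Run.snoc {S : LFSA Q E A} {q q' q'' : Q} {s : List E} {e : E}
    (h : S.Run q s q') (hd : S.δ q' e q'') : S.Run q (s ++ [e]) q'' :=
  h.append (.cons hd (.nil _))

theorem out_append (S : LFSA Q E A) (s t : List E) :
    S.out (s ++ t) = S.out s ++ S.out t := List.filterMap_append ..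

theorem out_nil (S : LFSA Q E A) : S.out ([] : List E) = [] := rfl

theorem run_nil_inv {S : LFSA Q E A} {q q' : Q} (h : S.Run q [] q') : q = q' := by
  cases h; rfl

theorem run_cons_inv {S : LFSA Q E A} {q q' : Q} {e : E} {s : List E}
    (h : S.Run q (e :: s) q') : ∃ qm, S.δ q e qm ∧ S.Run qm s q' := by
  cases h with
  | cons hd tl => exact ⟨_, hd, tl⟩

theorem run_shift {S : LFSA Q E A} {s : ℕ → E} {ρ : ℕ → Q}
    (h : ∀ n, S.δ (ρ n) (s n) (ρ (n+1))) (a : ℕ) :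
    ∀ len, S.Run (ρ a) (List.ofFn fun k : Fin len => s (a + k)) (ρ (a + len)) := by
  intro len
  induction len with
  | zero => simpa using Run.nil _
  | succ m ih =>
    have heq : (List.ofFn fun k : Fin (m+1) => s (a + k))
        = (List.ofFn fun k : Fin m => s (a + k)) ++ [s (a + m)] := by
      rw [List.ofFn_succ']
      simp [List.concat_eq_append]
    rw [heq, ← Nat.add_assoc]
    exact ih.snoc (h (a + m))

theorem run_repeat {S : LFSA Q E A} {q : Q} {v : List E} (h : S.Run q v q) :
    ∀ m, S.Run q ((List.replicate m v).flatten) q := by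
  intro m
  induction m with
  | zero => exact .nil _
  | succ k ih => rw [List.replicate_succ, List.flatten_cons]; exact h.append ih

theorem out_repeat (S : LFSA Q E A) (v : List E) (m : ℕ) :
    S.out ((List.replicate m v).flatten) = (List.replicate m (S.out v)).flatten := by
  induction m with
  | zero => rfl
  | succ k ih => simp [List.replicate_succ, out_append, ih]

theorem le_length_out_repeat (S : LFSA Q E A) {v : List E} (hv : S.out v ≠ []) (m : ℕ) :
    m ≤ (S.out ((List.replicate m v).flatten)).length := by
  induction m with
  | zero => simp
  | succ k ih =>
    rw [List.replicate_succ, List.flatten_cons, out_append, List.length_append]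
    have : 1 ≤ (S.out v).length := List.length_pos_iff.mpr hv
    omega

end LFSA


namespace LFSA

theorem cc_proj {Q E A : Type*} {S : LFSA Q E A} {p p' : Q × Q} {s : List (Option E × Option E)}
    (h : (S.CC S).Run p s p') :
    S.Run p.1 (lproj s) p'.1 ∧ S.Run p.2 (rproj s) p'.2 ∧
    S.out (lproj s) = (S.CC S).out s ∧ S.out (rproj s) = (S.CC S).out s := by
  induction h with
  | nil => exact ⟨.nil _, .nil _, rfl, rfl⟩
  | @cons q q' q'' ev s hd tl ih =>
    obtain ⟨r1, r2, o1, o2⟩ := ih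
    obtain ⟨ev1, ev2⟩ := ev
    match ev1, ev2 with
    | some e, some e' =>
      obtain ⟨⟨a, ha1, ha2⟩, h1, h2⟩ := hd
      exact ⟨.cons h1 r1, .cons h2 r2,
        by simpa [lproj, out, List.filterMap_cons, ha1, CC] using o1,
        by simpa [rproj, out, List.filterMap_cons, ha1, ha2, CC] using o2⟩
    | some e, none =>
      obtain ⟨ha, h1, h2⟩ := hd
      refine ⟨.cons h1 r1, h2 ▸ r2,
        by simpa [lproj, out, List.filterMap_cons, ha, CC] using o1,
        by simpa [rproj, out, List.filterMap_cons, ha, CC] using o2⟩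
    | none, some e' =>
      obtain ⟨ha, h1, h2⟩ := hd
      refine ⟨h1 ▸ r1, .cons h2 r2,
        by simpa [lproj, out, List.filterMap_cons, ha, CC] using o1,
        by simpa [rproj, out, List.filterMap_cons, ha, CC] using o2⟩
    | none, none => exact absurd hd id

theorem sync_eps_right {Q E A : Type*} {S : LFSA Q E A} {qb qb' : Q} {sb : List E}
    (h : S.Run qb sb qb') (ho : S.out sb = []) (qa : Q) :
    ∃ s, (S.CC S).Run (qa, qb) s (qa, qb') ∧ (S.CC S).out s = [] := by
  induction h with
  | nil => exact ⟨[], .nil _, rfl⟩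
  | @cons q q' q'' e s hd tl ih =>
    have hlab : S.lab e = none := by
      cases hl : S.lab e with
      | none => rfl
      | some a => rw [out, List.filterMap_cons, hl] at ho; exact absurd ho (by simp)
    have ho' : S.out s = [] := by rwa [out, List.filterMap_cons, hlab] at ho
    obtain ⟨t, ht, hout⟩ := ih ho'
    refine ⟨(none, some e) :: t, .cons (q' := (qa, q')) ⟨hlab, rfl, hd⟩ ht, ?_⟩
    simpa [out, List.filterMap_cons, CC] using hout

theorem strip {P F A : Type*} {T : LFSA P F A} {qb qb' : P} {sb : List F} {a : A} {τ : List A}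
    (h : T.Run qb sb qb') (ho : T.out sb = a :: τ) :
    ∃ u e' sb' qm qm', T.Run qb u qm ∧ T.out u = [] ∧ T.lab e' = some a ∧
      T.δ qm e' qm' ∧ T.Run qm' sb' qb' ∧ T.out sb' = τ := by
  induction h with
  | nil => exact absurd ho (by simp [out])
  | @cons q q' q'' e s hd tl ih =>
    cases hlab : T.lab e with
    | none =>
      have ho' : T.out s = a :: τ := by rwa [out, List.filterMap_cons, hlab] at ho
      obtain ⟨u, e', sb', qm, qm', h1, h2, h3, h4, h5, h6⟩ := ih ho'
      exact ⟨e :: u, e', sb', qm, qm', .cons hd h1,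
        by rw [out, List.filterMap_cons, hlab]; exact h2, h3, h4, h5, h6⟩
    | some b =>
      rw [out, List.filterMap_cons, hlab] at ho
      obtain ⟨hb, hτ⟩ := List.cons_eq_cons.mp ho
      exact ⟨[], e, s, q, q', .nil _, rfl, hb ▸ hlab, hd, tl, hτ⟩

theorem sync {Q E A : Type*} {S : LFSA Q E A} {qa qa' : Q} {sa : List E} (ha : S.Run qa sa qa') :
    ∀ {qb qb' : Q} {sb : List E}, S.Run qb sb qb' → S.out sa = S.out sb →
    ∃ s, (S.CC S).Run (qa, qb) s (qa', qb') ∧ (S.CC S).out s = S.out sa := by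
  induction ha with
  | nil qa =>
    intro qb qb' sb hb ho
    obtain ⟨s, hs, hout⟩ := sync_eps_right hb ho.symm qa
    exact ⟨s, hs, by rw [hout]; rfl⟩
  | @cons q q' q'' e sa' hd tl ih =>
    intro qb qb' sb hb ho
    cases hlab : S.lab e with
    | none =>
      rw [out, List.filterMap_cons, hlab] at ho
      obtain ⟨s, hs, hout⟩ := ih hb ho
      refine ⟨(some e, none) :: s, .cons (q' := (q', qb)) ⟨hlab, hd, rfl⟩ hs, ?_⟩
      show List.filterMap (S.CC S).lab ((some e, none) :: s) = List.filterMap S.lab (e :: sa')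
      have h3 : (S.CC S).lab (some e, none) = none := by simp [CC, hlab]
      rw [List.filterMap_cons, List.filterMap_cons, hlab, h3]
      simpa [out] using hout
    | some a =>
      rw [out, List.filterMap_cons, hlab] at ho
      obtain ⟨u, e', sb', qm, qm', h1, h2, h3, h4, h5, h6⟩ := strip hb ho.symm
      obtain ⟨su, hsu, hsuout⟩ := sync_eps_right h1 h2 q
      obtain ⟨s, hs, hout⟩ := ih h5 h6.symm
      refine ⟨su ++ (some e, some e') :: s,
        hsu.append (.cons ⟨⟨a, hlab, h3⟩, hd, h4⟩ hs), ?_⟩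
      have h1 : List.filterMap (S.CC S).lab su = [] := hsuout
      have h2 : List.filterMap (S.CC S).lab s = List.filterMap S.lab sa' := hout
      show List.filterMap (S.CC S).lab (su ++ (some e, some e') :: s)
          = List.filterMap S.lab (e :: sa')
      rw [List.filterMap_append, List.filterMap_cons, List.filterMap_cons, h1, h2]
      have h3 : (S.CC S).lab (some e, some e') = some a := by simp [CC, hlab]
      rw [h3, hlab]
      simp

end LFSA


namespace LFSA

theorem chain {P F A : Type*} {T : LFSA P F A} :
    ∀ (σ : List A) {q0 qe : P} {s : List F}, T.Run q0 s qe → T.out s = σ →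
    ∃ c : ℕ → P, c 0 = q0 ∧
      (∀ i j, i ≤ j → j ≤ σ.length →
        ∃ s', T.Run (c i) s' (c j) ∧ T.out s' = (σ.take j).drop i) ∧
      (∀ i, i ≤ σ.length → ∃ t, T.Run (c i) t qe ∧ T.out t = σ.drop i) := by
  intro σ
  induction σ with
  | nil =>
    intro q0 qe s h ho
    refine ⟨fun _ => q0, rfl, ?_, ?_⟩
    · intro i j hij hj
      have : j = 0 := Nat.le_zero.mp hj
      subst this
      have : i = 0 := Nat.le_zero.mp hij
      subst this
      exact ⟨[], .nil _, rfl⟩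
    · intro i hi
      exact ⟨s, h, by simpa using ho⟩
  | cons a τ ih =>
    intro q0 qe s h ho
    obtain ⟨u, e', sb', qm, qm', h1, h2, h3, h4, h5, h6⟩ := strip h ho
    obtain ⟨c, hc0, hmid, hend⟩ := ih h5 h6
    have hu : T.Run q0 (u ++ [e']) qm' := h1.snoc h4
    have huo : T.out (u ++ [e']) = [a] := by
      rw [out_append, h2]
      simp [out, List.filterMap_cons, h3]
    refine ⟨fun n => match n with | 0 => q0 | k+1 => c k, rfl, ?_, ?_⟩
    · intro i j hij hj
      match i, j with
      | 0, 0 => exact ⟨[], .nil _, rfl⟩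
      | 0, k+1 =>
        obtain ⟨s', hs', ho'⟩ := hmid 0 k (Nat.zero_le _) (by simpa using hj)
        refine ⟨(u ++ [e']) ++ s', ?_, ?_⟩
        · exact hu.append (hc0 ▸ hs')
        · rw [out_append, huo, ho']
          simp [List.take_succ_cons]
      | i'+1, k+1 =>
        obtain ⟨s', hs', ho'⟩ := hmid i' k (Nat.succ_le_succ_iff.mp hij) (by simpa using hj)
        exact ⟨s', hs', by simpa [List.take_succ_cons] using ho'⟩
    · intro i hi
      match i with
      | 0 =>
        refine ⟨u ++ e' :: sb', (h1.append (.cons h4 h5)), ?_⟩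
        rw [out_append, h2, out, List.filterMap_cons, h3, ← out, h6]
        simp
      | i'+1 =>
        obtain ⟨t, ht, hto⟩ := hend i' (by simpa using hi)
        exact ⟨t, ht, by simpa using hto⟩

theorem pump_aux {P F A : Type*} {T : LFSA P F A} {q0 qe : P} {s : List F} {σ : List A}
    (h : T.Run q0 s qe) (ho : T.out s = σ) {i j : ℕ} (hij : i < j) (hj : j ≤ σ.length)
    (c : ℕ → P) (hc0 : c 0 = q0)
    (hmid : ∀ i j, i ≤ j → j ≤ σ.length →
        ∃ s', T.Run (c i) s' (c j) ∧ T.out s' = (σ.take j).drop i)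
    (hend : ∀ i, i ≤ σ.length → ∃ t, T.Run (c i) t qe ∧ T.out t = σ.drop i)
    (heq : c i = c j) :
    ∃ q1 s1 s2 s3, T.Run q0 s1 q1 ∧ T.Run q1 s2 q1 ∧ T.out s2 ≠ [] ∧ T.Run q1 s3 qe := by
  obtain ⟨s1, hs1, _⟩ := hmid 0 i (Nat.zero_le _) (le_of_lt (lt_of_lt_of_le hij hj))
  obtain ⟨s2, hs2, ho2⟩ := hmid i j (le_of_lt hij) hj
  obtain ⟨s3, hs3, _⟩ := hend j hj
  refine ⟨c i, s1, s2, s3, hc0 ▸ hs1, heq ▸ hs2, ?_, heq ▸ hs3⟩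
  intro hnil
  rw [hnil] at ho2
  have := congrArg List.length ho2
  simp [List.length_drop, List.length_take] at this
  omega

theorem pump {P F A : Type*} [Fintype P] {T : LFSA P F A} {q0 qe : P} {s : List F}
    (h : T.Run q0 s qe) (hlen : Fintype.card P ≤ (T.out s).length) :
    ∃ q1 s1 s2 s3, T.Run q0 s1 q1 ∧ T.Run q1 s2 q1 ∧ T.out s2 ≠ [] ∧ T.Run q1 s3 qe := by
  obtain ⟨c, hc0, hmid, hend⟩ := chain (T.out s) h rfl
  obtain ⟨i, j, hne, heq⟩ := Fintype.exists_ne_map_eq_of_card_lt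
    (fun i : Fin ((T.out s).length + 1) => c i) (by simpa using Nat.lt_succ_of_le hlen)
  rcases lt_or_gt_of_ne hne with hlt | hlt
  · exact pump_aux h rfl (i := i) (j := j) hlt (Nat.lt_succ_iff.mp j.isLt) c hc0 hmid hend heq
  · exact pump_aux h rfl (i := j) (j := i) hlt (Nat.lt_succ_iff.mp i.isLt) c hc0 hmid hend heq.symm

theorem prefix_out_seq {Q E A : Type*} (S : LFSA Q E A) (s : ℕ → E) :
    ∀ (n : ℕ) (σ : List A), σ <+: S.out (List.ofFn fun i : Fin n => s i) →
    ∃ m ≤ n, S.out (List.ofFn fun i : Fin m => s i) = σ := by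
  intro n
  induction n with
  | zero =>
    intro σ h
    simp [out] at h
    exact ⟨0, le_refl _, by simp [out, h]⟩
  | succ n ih =>
    intro σ h
    have hsplit : (List.ofFn fun i : Fin (n+1) => s i)
        = (List.ofFn fun i : Fin n => s i) ++ [s n] := by
      rw [List.ofFn_succ']
      simp [List.concat_eq_append]
    rw [hsplit, out_append] at h
    set X := S.out (List.ofFn fun i : Fin n => s i) with hX
    by_cases hlen : σ.length ≤ X.length
    · have hpre : σ <+: X :=
        List.prefix_of_prefix_length_le h (X.prefix_append _) hlen
      obtain ⟨m, hm, hmo⟩ := ih σ hpre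
      exact ⟨m, Nat.le_succ_of_le hm, hmo⟩
    · have hY : (S.out [s n]).length ≤ 1 := by
        rw [out]
        rcases hl : S.lab (s n) with _ | a <;> simp [List.filterMap_cons, hl]
      have : σ = X ++ S.out [s n] := by
        refine h.eq_of_length_le ?_
        rw [List.length_append]
        omega
      exact ⟨n+1, le_refl _, by rw [hsplit, out_append, ← this]⟩

end LFSA


namespace LFSA

theorem cyc_inf {Q E A : Type*} {S : LFSA Q E A} {p : Q} {w : List E}
    (hw : S.Run p w p) (hne : w ≠ []) :
    ∃ (s : ℕ → E) (ρ : ℕ → Q), ρ 0 = p ∧ ∀ n, S.δ (ρ n) (s n) (ρ (n+1)) := by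
  obtain ⟨e0, w0, rfl⟩ : ∃ e0 w0, w = e0 :: w0 := by
    cases w with
    | nil => exact absurd rfl hne
    | cons a l => exact ⟨a, l, rfl⟩
  set St := {x : Q × E × List E // S.Run x.1 (x.2.1 :: x.2.2) p} with hSt
  have hstep : ∀ x : St, ∃ y : St, S.δ x.1.1 x.1.2.1 y.1.1 := by
    rintro ⟨⟨q, e, r⟩, hx⟩
    obtain ⟨q', hδ, hr⟩ := run_cons_inv hx
    cases r with
    | nil =>
      have : q' = p := run_nil_inv hr
      subst this
      exact ⟨⟨(q', e0, w0), hw⟩, hδ⟩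
    | cons e1 r1 => exact ⟨⟨(q', e1, r1), hr⟩, hδ⟩
  let f : ℕ → St := fun n => Nat.rec ⟨(p, e0, w0), hw⟩ (fun _ x => (hstep x).choose) n
  refine ⟨fun n => (f n).1.2.1, fun n => (f n).1.1, rfl, fun n => ?_⟩
  show S.δ (f n).val.1 (f n).val.2.1 (f (n+1)).val.1
  have : f (n+1) = (hstep (f n)).choose := rfl
  rw [this]
  exact (hstep (f n)).choose_spec

theorem prepend {Q E A : Type*} {S : LFSA Q E A} {q0 q : Q} {u : List E}
    (hu : S.Run q0 u q) {s : ℕ → E} {ρ : ℕ → Q} (h0 : ρ 0 = q)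
    (hδ : ∀ n, S.δ (ρ n) (s n) (ρ (n+1))) :
    ∃ (s' : ℕ → E) (ρ' : ℕ → Q), ρ' 0 = q0 ∧ (∀ n, S.δ (ρ' n) (s' n) (ρ' (n+1))) ∧
      (List.ofFn fun i : Fin u.length => s' i) = u := by
  induction hu with
  | nil q1 => exact ⟨s, ρ, h0, hδ, by simp⟩
  | @cons qa qb qc e u' hd tl ih =>
    obtain ⟨s', ρ', h0', hδ', hofn⟩ := ih h0
    refine ⟨fun n => match n with | 0 => e | n+1 => s' n,
            fun n => match n with | 0 => qa | n+1 => ρ' n, rfl, ?_, ?_⟩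
    · intro n
      match n with
      | 0 => show S.δ qa e (ρ' 0); exact h0'.symm ▸ hd
      | n+1 => show S.δ (ρ' n) (s' n) (ρ' (n+1)); exact hδ' n
    · show (List.ofFn fun i : Fin (u'.length + 1) => _) = e :: u'
      rw [List.ofFn_succ]
      exact congrArg (e :: ·) hofn

theorem inf_run {Q E A : Type*} {S : LFSA Q E A} {q0 q : Q} {u w : List E}
    (hu : S.Run q0 u q) (hw : S.Run q w q) (hne : w ≠ []) :
    ∃ (s : ℕ → E) (ρ : ℕ → Q), ρ 0 = q0 ∧ (∀ n, S.δ (ρ n) (s n) (ρ (n+1))) ∧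
      (List.ofFn fun i : Fin u.length => s i) = u := by
  obtain ⟨s, ρ, h0, hδ⟩ := cyc_inf hw hne
  exact prepend hu h0 hδ

end LFSA


namespace LFSA

theorem cycle_of_lt {Q E A : Type*} {S : LFSA Q E A} {s : ℕ → E} {ρ : ℕ → Q}
    (hδ : ∀ n, S.δ (ρ n) (s n) (ρ (n+1))) {m i j : ℕ} (hij : i < j)
    (heq : ρ (m+i) = ρ (m+j)) : S.CycleReachableFrom (ρ m) := by
  have hcyc : ∃ w : List E, w ≠ [] ∧ S.Run (ρ (m+i)) w (ρ (m+i)) := by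
    have hr := run_shift hδ (m+i) (j-i)
    rw [show m+i+(j-i) = m+j from by omega, ← heq] at hr
    refine ⟨_, List.length_pos_iff.mp ?_, hr⟩
    simp
    omega
  rcases Nat.eq_zero_or_pos i with hi | hi
  · subst hi
    exact ⟨ρ (m+0), Or.inl (congrArg ρ (Nat.add_zero m)), hcyc⟩
  · refine ⟨ρ (m+i), Or.inr ⟨List.ofFn fun k : Fin i => s (m+k), List.length_pos_iff.mp ?_,
      run_shift hδ m i⟩, hcyc⟩
    simp
    omega

theorem omegaSD_of_not_witness {Q E A : Type*} [Fintype Q] (S : LFSA Q E A)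
    (hw : ¬ ∃ q0' ∈ (S.CC S).Q0, ∃ (q1' q2' : Q × Q)
        (s1' s2' s3' : List (Option E × Option E)),
        (S.CC S).Run q0' s1' q1' ∧ (S.CC S).Run q1' s2' q1' ∧ (S.CC S).Run q1' s3' q2' ∧
        (S.CC S).out s2' ≠ [] ∧ q2'.1 ≠ q2'.2 ∧ S.CycleReachableFrom q2'.1) :
    S.OmegaSD := by
  refine ⟨Fintype.card Q * Fintype.card Q + 1, Nat.succ_pos _, ?_⟩
  intro s ρ hρ0 hδ n σ hpre hk
  by_contra hM
  push_neg at hM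
  obtain ⟨m, hm, hσ⟩ := prefix_out_seq S s n σ hpre
  have hrun : S.Run (ρ 0) (List.ofFn fun i : Fin m => s i) (ρ m) := by
    have := run_shift hδ 0 m
    simpa using this
  have hx : ρ m ∈ S.M σ := ⟨ρ 0, hρ0, _, hσ, hrun⟩
  have hy : ∃ y ∈ S.M σ, y ≠ ρ m := by
    by_contra h
    push_neg at h
    exact hM (ρ m) (Set.eq_singleton_iff_unique_mem.mpr ⟨hx, h⟩)
  obtain ⟨y, hyM, hyne⟩ := hy
  obtain ⟨q0b, hq0b, tb, htbo, htb⟩ := hyM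
  obtain ⟨sc, hsc, hsco⟩ := sync hrun htb (by rw [hσ, htbo])
  have hcard : Fintype.card (Q × Q) ≤ ((S.CC S).out sc).length := by
    rw [hsco, hσ, Fintype.card_prod]
    omega
  obtain ⟨q1', s1', s2', s3', hr1, hr2, hne2, hr3⟩ := pump hsc hcard
  have hcyc : S.CycleReachableFrom (ρ m) := by
    obtain ⟨i, j, hne, heq⟩ := Fintype.exists_ne_map_eq_of_card_lt
      (fun i : Fin (Fintype.card Q + 1) => ρ (m + i)) (by simp)
    rcases lt_or_gt_of_ne hne with hlt | hlt
    · exact cycle_of_lt hδ hlt heq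
    · exact cycle_of_lt hδ hlt heq.symm
  exact hw ⟨(ρ 0, q0b), ⟨hρ0, hq0b⟩, q1', (ρ m, y), s1', s2', s3',
    hr1, hr2, hr3, hne2, Ne.symm hyne, hcyc⟩

theorem not_omega_of_witness {Q E A : Type*} (S : LFSA Q E A)
    (q0' q1' q2' : Q × Q) (s1' s2' s3' : List (Option E × Option E))
    (hq0 : q0' ∈ (S.CC S).Q0)
    (h1 : (S.CC S).Run q0' s1' q1') (h2 : (S.CC S).Run q1' s2' q1')
    (h3 : (S.CC S).Run q1' s3' q2') (hne : (S.CC S).out s2' ≠ [])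
    (hdiff : q2'.1 ≠ q2'.2) (hcyc : S.CycleReachableFrom q2'.1) : ¬ S.OmegaSD := by
  rintro ⟨k, hk, h⟩
  obtain ⟨L1, R1, o1l, o1r⟩ := cc_proj h1
  obtain ⟨L2, R2, o2l, o2r⟩ := cc_proj h2
  obtain ⟨L3, R3, o3l, o3r⟩ := cc_proj h3
  obtain ⟨p, hp, wc, hwcne, hwc⟩ := hcyc
  have hpath : ∃ path, S.Run q2'.1 path p := by
    rcases hp with rfl | ⟨path, _, hpath⟩
    exacts [⟨[], .nil _⟩, ⟨path, hpath⟩]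
  obtain ⟨path, hpath⟩ := hpath
  set rep := (List.replicate (k+1) (lproj s2')).flatten with hrep
  set body := lproj s1' ++ rep ++ lproj s3' with hbody
  have hbodyrun : S.Run q0'.1 body q2'.1 :=
    (L1.append (run_repeat L2 (k+1))).append L3
  have hurun : S.Run q0'.1 (body ++ path) p := hbodyrun.append hpath
  obtain ⟨s, ρ, hρ0, hδ, hofn⟩ := inf_run hurun hwc hwcne
  have hv : S.out (lproj s2') ≠ [] := by rw [o2l]; exact hne
  have hσlen : k < (S.out body).length := by
    rw [hbody, out_append, out_append, List.length_append, List.length_append]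
    have h2 := le_length_out_repeat S hv (k+1)
    rw [← hrep] at h2
    omega
  have hpre : S.out body <+: S.out (List.ofFn fun i : Fin (body ++ path).length => s i) := by
    rw [hofn]
    exact ⟨S.out path, (out_append S body path).symm⟩
  obtain ⟨q, hq⟩ := h s ρ (by rw [hρ0]; exact hq0.1) hδ (body ++ path).length
    (S.out body) hpre hσlen
  have hmem1 : q2'.1 ∈ S.M (S.out body) := ⟨q0'.1, hq0.1, body, rfl, hbodyrun⟩
  have hbodyRrun : S.Run q0'.2
      (rproj s1' ++ (List.replicate (k+1) (rproj s2')).flatten ++ rproj s3') q2'.2 :=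
    (R1.append (run_repeat R2 (k+1))).append R3
  have hout_eq : S.out (rproj s1' ++ (List.replicate (k+1) (rproj s2')).flatten ++ rproj s3')
      = S.out body := by
    rw [hbody, hrep, out_append, out_append, out_append, out_append, out_repeat, out_repeat,
      o1r, o2r, o3r, o1l, o2l, o3l]
  have hmem2 : q2'.2 ∈ S.M (S.out body) := ⟨q0'.2, hq0.2, _, hout_eq, hbodyRrun⟩
  rw [hq] at hmem1 hmem2
  exact hdiff (hmem1.trans hmem2.symm)

end LFSA

/-- concurrent-composition characterization of non-ω-strong detectability. -/
theorem stmt2 {Q E A : Type*} [Fintype Q] (S : LFSA Q E A) :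
    ¬ S.OmegaSD ↔
      ∃ q0' ∈ (S.CC S).Q0, ∃ (q1' q2' : Q × Q)
        (s1' s2' s3' : List (Option E × Option E)),
        (S.CC S).Run q0' s1' q1' ∧ (S.CC S).Run q1' s2' q1' ∧ (S.CC S).Run q1' s3' q2' ∧
        (S.CC S).out s2' ≠ [] ∧ q2'.1 ≠ q2'.2 ∧ S.CycleReachableFrom q2'.1 := by
  constructor
  · intro hnot
    by_contra hw
    exact hnot (LFSA.omegaSD_of_not_witness S hw)
  · rintro ⟨q0', hq0, q1', q2', s1', s2', s3', h1, h2, h3, hne, hdiff, hcyc⟩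
    exact LFSA.not_omega_of_witness S q0' q1' q2' s1' s2' s3' hq0 h1 h2 h3 hne hdiff hcyc
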